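/- Let a₀, a₁, a₂, a₃ ∈ ℝ² with a₀ ≠ a₁, and suppose neither a₂ nor a₃ lies on the affine line through a₀ and a₁. If the open segments (a₀,a₁) and (a₂,a₃) have a point in common, then the open segments (a₁,a₂) and (a₃,a₀) are disjoint. (Hence in any generic planar projection of a closed polygon with four edges, the two pairs of opposite edges cannot both cross: at most one crossing occurs.) -/

import Mathlib

noncomputable section

/-- The Euclidean plane. -/
abbrev R2 := EuclideanSpace ℝ (Fin 2)

set_option maxHeartbeats 1000000 in
/-- If `a₀ ≠ a₁` and neither `a₂` nor `a₃` lies on the line through `a₀, a₁`, and the open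
segments `(a₀,a₁)` and `(a₂,a₃)` meet, then the open segments `(a₁,a₂)` and `(a₃,a₀)` are
disjoint: in a generic planar projection of a closed quadrilateral at most one pair of
opposite edges crosses. -/
theorem quadrilateral_at_most_one_crossing (a₀ a₁ a₂ a₃ : R2)
    (h01 : a₀ ≠ a₁)
    (h2 : a₂ ∉ line[ℝ, a₀, a₁]) (h3 : a₃ ∉ line[ℝ, a₀, a₁])
    (hcross : (openSegment ℝ a₀ a₁ ∩ openSegment ℝ a₂ a₃).Nonempty) :
    Disjoint (openSegment ℝ a₁ a₂) (openSegment ℝ a₃ a₀) := by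
  set f : R2 → ℝ :=
    fun x => (a₁ 0 - a₀ 0) * (x 1 - a₀ 1) - (a₁ 1 - a₀ 1) * (x 0 - a₀ 0) with hf
  have fcomb : ∀ (α β : ℝ) (x y : R2), α + β = 1 →
      f (α • x + β • y) = α * f x + β * f y := by
    intro α β x y hαβ
    have hβ : β = 1 - α := by linarith
    subst hβ
    simp only [hf, PiLp.add_apply, PiLp.smul_apply, smul_eq_mul]
    ring
  have f0 : f a₀ = 0 := by simp only [hf]; ring
  have f1 : f a₁ = 0 := by simp only [hf]; ring
  have hne : a₁ 0 - a₀ 0 ≠ 0 ∨ a₁ 1 - a₀ 1 ≠ 0 := by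
    by_contra h
    push_neg at h
    obtain ⟨h1', h2'⟩ := h
    apply h01
    ext i
    fin_cases i
    · show a₀ 0 = a₁ 0; linarith
    · show a₀ 1 = a₁ 1; linarith
  have fzero : ∀ x : R2, f x = 0 → x ∈ line[ℝ, a₀, a₁] := by
    intro x hx
    simp only [hf] at hx
    rcases hne with hu | hu
    · have hx' : ((x 0 - a₀ 0) / (a₁ 0 - a₀ 0)) • (a₁ -ᵥ a₀) +ᵥ a₀ = x := by
        simp only [vsub_eq_sub, vadd_eq_add]
        ext i
        fin_cases i
        · show _ * (a₁ 0 - a₀ 0) + a₀ 0 = x 0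
          field_simp
          ring
        · show _ * (a₁ 1 - a₀ 1) + a₀ 1 = x 1
          field_simp
          linear_combination -hx
      rw [← hx']
      exact smul_vsub_vadd_mem_affineSpan_pair _ _ _
    · have hx' : ((x 1 - a₀ 1) / (a₁ 1 - a₀ 1)) • (a₁ -ᵥ a₀) +ᵥ a₀ = x := by
        simp only [vsub_eq_sub, vadd_eq_add]
        ext i
        fin_cases i
        · show _ * (a₁ 0 - a₀ 0) + a₀ 0 = x 0
          field_simp
          linear_combination hx
        · show _ * (a₁ 1 - a₀ 1) + a₀ 1 = x 1
          field_simp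
          ring
      rw [← hx']
      exact smul_vsub_vadd_mem_affineSpan_pair _ _ _
  have hF2 : f a₂ ≠ 0 := fun h => h2 (fzero _ h)
  have hF3 : f a₃ ≠ 0 := fun h => h3 (fzero _ h)
  -- the crossing point gives opposite signs for f a₂ and f a₃
  obtain ⟨c, hc1, hc2⟩ := hcross
  obtain ⟨α, β, hα, hβ, hαβ, hce⟩ := hc1
  obtain ⟨γ, δ, hγ, hδ, hγδ, hce'⟩ := hc2
  have hfc0 : f c = 0 := by
    rw [← hce, fcomb α β a₀ a₁ hαβ, f0, f1]; ring
  have heq : γ * f a₂ + δ * f a₃ = 0 := by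
    rw [← fcomb γ δ a₂ a₃ hγδ, hce', hfc0]
  have hsign : f a₂ * f a₃ < 0 := by
    have h1 : γ * (f a₂ * f a₃) = -δ * (f a₃ * f a₃) := by
      linear_combination f a₃ * heq
    nlinarith [mul_self_pos.mpr hF3, mul_pos hδ (mul_self_pos.mpr hF3)]
  rw [Set.disjoint_left]
  rintro p ⟨s, t, hs, ht, hst, rfl⟩ ⟨u, v, hu, hv, huv, hpe⟩
  have hp1 : f (s • a₁ + t • a₂) = t * f a₂ := by
    rw [fcomb s t a₁ a₂ hst, f1]; ring
  have hp2 : f (s • a₁ + t • a₂) = u * f a₃ := by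
    rw [← hpe, fcomb u v a₃ a₀ huv, f0]; ring
  have heq2 : t * f a₂ = u * f a₃ := hp1 ▸ hp2
  have h3' : u * (f a₃ * f a₂) < 0 := by
    have : f a₃ * f a₂ < 0 := by linarith [mul_comm (f a₂) (f a₃) ▸ hsign]
    exact mul_neg_of_pos_of_neg hu this
  have h4 : t * (f a₂ * f a₂) = u * (f a₃ * f a₂) := by
    linear_combination f a₂ * heq2
  nlinarith [mul_pos ht (mul_self_pos.mpr hF2)]
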